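/- Consider a finite discounted CMDP and a constraint threshold b ∈ ℝ. Suppose π* is a policy with V_c^{π*}(ρ) ≥ b, and λ* ≥ 0 satisfies strong duality in the sense that V_r^π(ρ) + λ*·(V_c^π(ρ) − b) ≤ V_r^{π*}(ρ) for every policy π. Let π̃ be any policy and set ζ = V_c^{π̃}(ρ) − b. If ζ > 0, then λ* ≤ (V_r^{π*}(ρ) − V_r^{π̃}(ρ))/ζ ≤ 1/(ζ·(1−γ)). -/

import Mathlib

open scoped BigOperators
open Matrix Finset

noncomputable section CMDP

variable {S A : Type*} [Fintype S] [Fintype A] [DecidableEq S]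

/-- `P` is a transition kernel: `P s a` is a probability vector on states. -/
def isKernel (P : S → A → S → ℝ) : Prop :=
  ∀ s a, (∀ s', 0 ≤ P s a s') ∧ (∑ s', P s a s') = 1

/-- `π` is a (memoryless, stochastic) policy. -/
def isPolicy (π : S → A → ℝ) : Prop :=
  ∀ s, (∀ a, 0 ≤ π s a) ∧ (∑ a, π s a) = 1

/-- `ρ` is a probability vector on states. -/
def isProbVec (ρ : S → ℝ) : Prop :=
  (∀ s, 0 ≤ ρ s) ∧ (∑ s, ρ s) = 1

/-- The transition matrix `P_π` induced by a policy. -/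
def Pmat (P : S → A → S → ℝ) (π : S → A → ℝ) : Matrix S S ℝ :=
  Matrix.of fun s s' => ∑ a, π s a * P s a s'

/-- State-wise expected reward `r_π`. -/
def rvec (r : S → A → ℝ) (π : S → A → ℝ) : S → ℝ :=
  fun s => ∑ a, π s a * r s a

/-- The value vector `V^π = (I - γ P_π)⁻¹ r_π`. -/
def Vvec (γ : ℝ) (P : S → A → S → ℝ) (r : S → A → ℝ) (π : S → A → ℝ) : S → ℝ :=
  ((1 : Matrix S S ℝ) - γ • Pmat P π)⁻¹ *ᵥ rvec r π

/-- The scalar value `V^π(ρ)`. -/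
def Vval (γ : ℝ) (P : S → A → S → ℝ) (r : S → A → ℝ) (ρ : S → ℝ) (π : S → A → ℝ) : ℝ :=
  ∑ s, ρ s * Vvec γ P r π s

/-- The action-value function `Q^π(s,a) = r(s,a) + γ ∑_{s'} P(s'|s,a) V^π(s')`. -/
def Qfun (γ : ℝ) (P : S → A → S → ℝ) (r : S → A → ℝ) (π : S → A → ℝ) : S → A → ℝ :=
  fun s a => r s a + γ * ∑ s', P s a s' * Vvec γ P r π s'

/-- The normalized discounted occupancy measure `ν_{ρ,π} = (1-γ) ρᵀ (I - γ P_π)⁻¹`. -/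
def occMeas (γ : ℝ) (P : S → A → S → ℝ) (ρ : S → ℝ) (π : S → A → ℝ) : S → ℝ :=
  fun s => (1 - γ) * (ρ ᵥ* ((1 : Matrix S S ℝ) - γ • Pmat P π)⁻¹) s

end CMDP


section Aux
variable {S A : Type*} [Fintype S] [Fintype A] [DecidableEq S] [Nonempty S] [Nonempty A]

lemma Vvec_bounds (γ : ℝ) (hγ0 : 0 ≤ γ) (hγ1 : γ < 1)
    (P : S → A → S → ℝ) (hP : isKernel P)
    (r : S → A → ℝ) (hr : ∀ s a, r s a ∈ Set.Icc (0 : ℝ) 1)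
    (π : S → A → ℝ) (hπ : isPolicy π) :
    ∀ s, 0 ≤ Vvec γ P r π s ∧ Vvec γ P r π s ≤ 1 / (1 - γ) := by
  set M : Matrix S S ℝ := Pmat P π with hM
  have hMnn : ∀ s s', 0 ≤ M s s' := by
    intro s s'
    exact Finset.sum_nonneg fun a _ => mul_nonneg ((hπ s).1 a) ((hP s a).1 s')
  have hMrow : ∀ s, ∑ s', M s s' = 1 := by
    intro s
    have : ∑ s', ∑ a, π s a * P s a s' = ∑ a, ∑ s', π s a * P s a s' :=
      Finset.sum_comm
    simp only [hM, Pmat, Matrix.of_apply]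
    rw [this]
    have : ∀ a ∈ Finset.univ (α := A), ∑ s', π s a * P s a s' = π s a := by
      intro a _
      rw [← Finset.mul_sum, (hP s a).2, mul_one]
    rw [Finset.sum_congr rfl this, (hπ s).2]
  set A' : Matrix S S ℝ := (1 : Matrix S S ℝ) - γ • M with hA
  -- A' has nonzero det
  have hdet : A'.det ≠ 0 := by
    intro hd
    obtain ⟨v, hv0, hv⟩ := (Matrix.exists_mulVec_eq_zero_iff).2 hd
    -- v = γ • (M *ᵥ v)
    have hveq : ∀ s, v s = γ * (M *ᵥ v) s := by
      intro s
      have := congrFun hv s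
      simp only [hA, Matrix.sub_mulVec, Matrix.one_mulVec, Matrix.smul_mulVec,
        Pi.sub_apply, Pi.smul_apply, smul_eq_mul, Pi.zero_apply] at this
      linarith
    obtain ⟨s0, -, hs0⟩ := Finset.exists_max_image Finset.univ (fun s => |v s|)
      ⟨Classical.arbitrary S, Finset.mem_univ _⟩
    have hbound : |v s0| ≤ γ * |v s0| := by
      calc |v s0| = γ * |(M *ᵥ v) s0| := by rw [hveq s0, abs_mul, abs_of_nonneg hγ0]
        _ ≤ γ * |v s0| := by
            apply mul_le_mul_of_nonneg_left _ hγ0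
            calc |(M *ᵥ v) s0| = |∑ s', M s0 s' * v s'| := rfl
              _ ≤ ∑ s', |M s0 s' * v s'| := Finset.abs_sum_le_sum_abs _ _
              _ ≤ ∑ s', M s0 s' * |v s0| := by
                  apply Finset.sum_le_sum
                  intro s' _
                  rw [abs_mul, abs_of_nonneg (hMnn s0 s')]
                  exact mul_le_mul_of_nonneg_left (hs0 s' (Finset.mem_univ _)) (hMnn s0 s')
              _ = |v s0| := by rw [← Finset.sum_mul, hMrow, one_mul]
    have h0 : |v s0| = 0 := by nlinarith [abs_nonneg (v s0)]
    apply hv0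
    funext s
    have := hs0 s (Finset.mem_univ _)
    have : |v s| = 0 := le_antisymm (h0 ▸ this) (abs_nonneg _)
    simpa [abs_eq_zero] using this
  have hunit : IsUnit A'.det := isUnit_iff_ne_zero.2 hdet
  set V : S → ℝ := Vvec γ P r π with hV
  have hfix : ∀ s, V s = rvec r π s + γ * (M *ᵥ V) s := by
    have : A' *ᵥ V = rvec r π := by
      simp only [hV, Vvec, ← hM, ← hA]
      rw [Matrix.mulVec_mulVec, Matrix.mul_nonsing_inv A' hunit, Matrix.one_mulVec]
    intro s
    have := congrFun this s
    simp only [hA, Matrix.sub_mulVec, Matrix.one_mulVec, Matrix.smul_mulVec,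
      Pi.sub_apply, Pi.smul_apply, smul_eq_mul] at this
    linarith
  have hrv : ∀ s, 0 ≤ rvec r π s ∧ rvec r π s ≤ 1 := by
    intro s
    constructor
    · exact Finset.sum_nonneg fun a _ => mul_nonneg ((hπ s).1 a) (hr s a).1
    · calc ∑ a, π s a * r s a ≤ ∑ a, π s a * 1 :=
            Finset.sum_le_sum fun a _ => mul_le_mul_of_nonneg_left (hr s a).2 ((hπ s).1 a)
        _ = 1 := by simp [(hπ s).2]
  have h1γ : 0 < 1 - γ := by linarith
  intro s
  constructor
  · -- lower bound via min
    obtain ⟨s2, -, hs2⟩ := Finset.exists_min_image Finset.univ V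
      ⟨Classical.arbitrary S, Finset.mem_univ _⟩
    have hmv : γ * V s2 ≤ V s2 := by
      have heq := hfix s2
      have hMV : V s2 ≤ (M *ᵥ V) s2 := by
        calc V s2 = ∑ s', M s2 s' * V s2 := by rw [← Finset.sum_mul, hMrow, one_mul]
          _ ≤ ∑ s', M s2 s' * V s' :=
            Finset.sum_le_sum fun s' _ =>
              mul_le_mul_of_nonneg_left (hs2 s' (Finset.mem_univ _)) (hMnn s2 s')
          _ = (M *ᵥ V) s2 := rfl
      linarith [(hrv s2).1, mul_le_mul_of_nonneg_left hMV hγ0]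
    have hVs2 : 0 ≤ V s2 := by nlinarith
    exact le_trans hVs2 (hs2 s (Finset.mem_univ _))
  · -- upper bound via max
    obtain ⟨s1, -, hs1⟩ := Finset.exists_max_image Finset.univ V
      ⟨Classical.arbitrary S, Finset.mem_univ _⟩
    have hMV : (M *ᵥ V) s1 ≤ V s1 := by
      calc (M *ᵥ V) s1 = ∑ s', M s1 s' * V s' := rfl
        _ ≤ ∑ s', M s1 s' * V s1 :=
          Finset.sum_le_sum fun s' _ =>
            mul_le_mul_of_nonneg_left (hs1 s' (Finset.mem_univ _)) (hMnn s1 s')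
        _ = V s1 := by rw [← Finset.sum_mul, hMrow, one_mul]
    have hVs1 : V s1 ≤ 1 / (1 - γ) := by
      have := hfix s1
      rw [le_div_iff₀ h1γ]
      nlinarith [(hrv s1).2, mul_le_mul_of_nonneg_left hMV hγ0]
    exact le_trans (hs1 s (Finset.mem_univ _)) hVs1

lemma Vval_bounds (γ : ℝ) (hγ0 : 0 ≤ γ) (hγ1 : γ < 1)
    (P : S → A → S → ℝ) (hP : isKernel P)
    (r : S → A → ℝ) (hr : ∀ s a, r s a ∈ Set.Icc (0 : ℝ) 1)
    (ρ : S → ℝ) (hρ : isProbVec ρ)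
    (π : S → A → ℝ) (hπ : isPolicy π) :
    0 ≤ Vval γ P r ρ π ∧ Vval γ P r ρ π ≤ 1 / (1 - γ) := by
  have hb := Vvec_bounds γ hγ0 hγ1 P hP r hr π hπ
  constructor
  · exact Finset.sum_nonneg fun s _ => mul_nonneg (hρ.1 s) (hb s).1
  · calc ∑ s, ρ s * Vvec γ P r π s ≤ ∑ s, ρ s * (1 / (1 - γ)) :=
        Finset.sum_le_sum fun s _ => mul_le_mul_of_nonneg_left (hb s).2 (hρ.1 s)
      _ = 1 / (1 - γ) := by rw [← Finset.sum_mul, hρ.2, one_mul]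

end Aux

/-- bound on the optimal dual variable. -/
theorem dual_variable_bound
    {S A : Type*} [Fintype S] [Fintype A] [DecidableEq S] [Nonempty S] [Nonempty A]
    (γ : ℝ) (hγ0 : 0 ≤ γ) (hγ1 : γ < 1)
    (P : S → A → S → ℝ) (hP : isKernel P)
    (r : S → A → ℝ) (hr : ∀ s a, r s a ∈ Set.Icc (0 : ℝ) 1)
    (c : S → A → ℝ) (hc : ∀ s a, c s a ∈ Set.Icc (0 : ℝ) 1)
    (ρ : S → ℝ) (hρ : isProbVec ρ)
    (b : ℝ)
    (πs : S → A → ℝ) (hπs : isPolicy πs)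
    (hfeas : b ≤ Vval γ P c ρ πs)
    (lamStar : ℝ) (hlamStar : 0 ≤ lamStar)
    (hsd : ∀ π : S → A → ℝ, isPolicy π →
      Vval γ P r ρ π + lamStar * (Vval γ P c ρ π - b) ≤ Vval γ P r ρ πs)
    (πtil : S → A → ℝ) (hπtil : isPolicy πtil)
    (ζ : ℝ) (hζ : ζ = Vval γ P c ρ πtil - b) (hζpos : 0 < ζ) :
    lamStar ≤ (Vval γ P r ρ πs - Vval γ P r ρ πtil) / ζ ∧
      (Vval γ P r ρ πs - Vval γ P r ρ πtil) / ζ ≤ 1 / (ζ * (1 - γ)) := by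

  have h1γ : 0 < 1 - γ := by linarith
  have hbs := Vval_bounds γ hγ0 hγ1 P hP r hr ρ hρ πs hπs
  have hbt := Vval_bounds γ hγ0 hγ1 P hP r hr ρ hρ πtil hπtil
  have key := hsd πtil hπtil
  rw [← hζ] at key
  have hfirst : lamStar ≤ (Vval γ P r ρ πs - Vval γ P r ρ πtil) / ζ := by
    rw [le_div_iff₀ hζpos]; linarith
  refine ⟨hfirst, ?_⟩
  have hdiff : Vval γ P r ρ πs - Vval γ P r ρ πtil ≤ 1 / (1 - γ) := by linarith [hbs.2, hbt.1]
  have : (Vval γ P r ρ πs - Vval γ P r ρ πtil) / ζ ≤ (1 / (1 - γ)) / ζ :=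
    by gcongr
  calc (Vval γ P r ρ πs - Vval γ P r ρ πtil) / ζ ≤ (1 / (1 - γ)) / ζ := this
    _ = 1 / (ζ * (1 - γ)) := by field_simp
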